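/- If Γ ⊂ ℝⁿ is a d-dimensional Ahlfors regular set with d < n−1, then Ω = ℝⁿ \ Γ satisfies the corkscrew condition: there exists C₁ > 0, depending only on the AR constant C₀, n, and d, such that for every x ∈ Γ and every 0 < r < diam(Γ) there is a point A ∈ Ω ∩ B(x,r) with B(A, C₁⁻¹ r) ⊂ Ω. -/

import Mathlib

open MeasureTheory Metric Set
set_option maxHeartbeats 1000000 in

theorem complement_of_low_dimensional_AR_set_corkscrew
    (n : ℕ) (d C₀ : ℝ) (hd₀ : 0 ≤ d) (hd : d < (n : ℝ) - 1) (hC₀ : 0 < C₀)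
    (Γ : Set (EuclideanSpace ℝ (Fin n)))
    (hAR : ∀ x ∈ Γ, ∀ r : ℝ, 0 < r → ENNReal.ofReal r < EMetric.diam Γ →
      ENNReal.ofReal (C₀⁻¹ * r ^ d) ≤ μH[d] (Γ ∩ ball x r) ∧
      μH[d] (Γ ∩ ball x r) ≤ ENNReal.ofReal (C₀ * r ^ d)) :
    ∃ C₁ : ℝ, 0 < C₁ ∧
      ∀ x ∈ Γ, ∀ r : ℝ, 0 < r → ENNReal.ofReal r < EMetric.diam Γ →
        ∃ A : EuclideanSpace ℝ (Fin n), A ∈ Γᶜ ∩ ball x r ∧ ball A (C₁⁻¹ * r) ⊆ Γᶜ := by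
  classical
  have hdn : d + 1 < (n : ℝ) := by linarith
  have hn2 : 2 ≤ n := by
    by_contra h
    push_neg at h
    interval_cases n <;> push_cast at hdn <;> linarith
  haveI : Nontrivial (EuclideanSpace ℝ (Fin n)) := by
    have : 0 < Module.finrank ℝ (EuclideanSpace ℝ (Fin n)) := by simp; omega
    exact Module.nontrivial_of_finrank_pos this
  set C₁ : ℝ := 10 ^ n * C₀ ^ 2 + 10 with hC₁def
  have hC₁10 : (10 : ℝ) ≤ C₁ := by
    have : (0:ℝ) ≤ 10 ^ n * C₀ ^ 2 := by positivity
    linarith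
  have hC₁pos : (0:ℝ) < C₁ := by linarith
  refine ⟨C₁, hC₁pos, ?_⟩
  intro x hx r hr hrdiam
  by_contra hcon
  push_neg at hcon
  set s : ℝ := C₁⁻¹ * r with hsdef
  have hs : 0 < s := by positivity
  have hs8 : 8 * s ≤ r := by
    rw [hsdef]
    rw [inv_mul_eq_div, mul_div_assoc']
    rw [div_le_iff₀ hC₁pos]
    nlinarith
  -- density of Γ in ball x r
  have hdense : ∀ A ∈ ball x r, ∃ y ∈ Γ, dist y A < s := by
    intro A hA
    by_cases hAΓ : A ∈ Γ
    · exact ⟨A, hAΓ, by simpa using hs⟩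
    · have h := hcon A ⟨hAΓ, hA⟩
      rw [Set.not_subset] at h
      obtain ⟨y, hy1, hy2⟩ := h
      exact ⟨y, by simpa using hy2, mem_ball.mp hy1⟩
  -- the family of 4s-separated subsets of Y
  set Y : Set (EuclideanSpace ℝ (Fin n)) := Γ ∩ ball x (r/2 + s) with hYdef
  set P : Set (Set (EuclideanSpace ℝ (Fin n))) := {S | S ⊆ Y ∧ S.Pairwise (fun a b => 4*s ≤ dist a b)} with hPdef
  obtain ⟨F, -, hFmax⟩ := zorn_subset_nonempty P (by
    intro c hc hchain _
    refine ⟨⋃₀ c, ⟨?_, ?_⟩, fun t ht => subset_sUnion_of_mem ht⟩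
    · exact sUnion_subset fun t ht => (hc ht).1
    · intro a ha b hb hab
      obtain ⟨t₁, ht₁, hat⟩ := ha
      obtain ⟨t₂, ht₂, hbt⟩ := hb
      rcases hchain.total ht₁ ht₂ with h | h
      · exact (hc ht₂).2 (h hat) hbt hab
      · exact (hc ht₁).2 hat (h hbt) hab) ∅ ⟨empty_subset _, pairwise_empty _⟩
  have hFP : F ∈ P := hFmax.prop
  have hFY : F ⊆ Y := hFP.1
  have hFsep : F.Pairwise (fun a b => 4*s ≤ dist a b) := hFP.2
  -- maximality: F is a 4s-net of Y
  have hnet : ∀ p ∈ Y, ∃ f ∈ F, dist p f < 4*s := by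
    intro p hp
    by_contra hno
    push_neg at hno
    have hins : insert p F ∈ P := by
      constructor
      · exact insert_subset hp hFY
      · haveI : Std.Symm (fun a b : EuclideanSpace ℝ (Fin n) => 4*s ≤ dist a b) := ⟨fun a b h => by rwa [dist_comm]⟩
        rw [pairwise_insert_of_symm]
        exact ⟨hFsep, fun b hb _ => hno b hb⟩
    have : insert p F ⊆ F := hFmax.2 hins (subset_insert p F)
    have hpF : p ∈ F := this (mem_insert p F)
    have := hno p hpF
    simp at this
    linarith
  -- packing bound: any finite subset of F has card ≤ K
  set ν : Measure (EuclideanSpace ℝ (Fin n)) := (μH[d] : Measure (EuclideanSpace ℝ (Fin n))).restrict Γ with hν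
  have hpack : ∀ T : Finset (EuclideanSpace ℝ (Fin n)), ↑T ⊆ F → (T.card : ℝ) * (C₀⁻¹ * (2*s) ^ d) ≤ C₀ * r ^ d := by
    intro T hT
    have hdisj : (↑T : Set (EuclideanSpace ℝ (Fin n))).PairwiseDisjoint (fun f => ball f (2*s)) := by
      intro a ha b hb hab
      exact ball_disjoint_ball (by linarith [hFsep (hT ha) (hT hb) hab])
    have hsum : ∑ f ∈ T, ν (ball f (2*s)) = ν (⋃ f ∈ T, ball f (2*s)) :=
      (measure_biUnion_finset hdisj (fun b _ => measurableSet_ball)).symm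
    have hsub : (⋃ f ∈ T, ball f (2*s)) ⊆ ball x r := by
      intro z hz
      simp only [mem_iUnion] at hz
      obtain ⟨f, hf, hzf⟩ := hz
      have hfY : f ∈ Y := hFY (hT hf)
      have : dist f x < r/2 + s := hfY.2
      have : dist z x ≤ dist z f + dist f x := dist_triangle z f x
      have hzf' : dist z f < 2*s := hzf
      rw [mem_ball]
      linarith
    have hle : (T.card : ENNReal) * ENNReal.ofReal (C₀⁻¹ * (2*s) ^ d) ≤ ENNReal.ofReal (C₀ * r ^ d) := by
      calc (T.card : ENNReal) * ENNReal.ofReal (C₀⁻¹ * (2*s) ^ d)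
          = ∑ _f ∈ T, ENNReal.ofReal (C₀⁻¹ * (2*s) ^ d) := by
            rw [Finset.sum_const, nsmul_eq_mul]
        _ ≤ ∑ f ∈ T, ν (ball f (2*s)) := by
            refine Finset.sum_le_sum fun f hf => ?_
            have hfΓ : f ∈ Γ := (hFY (hT hf)).1
            have h2s : (0:ℝ) < 2*s := by linarith
            have h2sd : ENNReal.ofReal (2*s) < EMetric.diam Γ :=
              lt_of_le_of_lt (ENNReal.ofReal_le_ofReal (by linarith)) hrdiam
            have := (hAR f hfΓ (2*s) h2s h2sd).1
            rw [hν, Measure.restrict_apply measurableSet_ball, inter_comm]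
            exact this
        _ = ν (⋃ f ∈ T, ball f (2*s)) := hsum
        _ ≤ ν (ball x r) := measure_mono hsub
        _ = μH[d] (Γ ∩ ball x r) := by
            rw [hν, Measure.restrict_apply measurableSet_ball, inter_comm]
        _ ≤ ENNReal.ofReal (C₀ * r ^ d) := (hAR x hx r hr hrdiam).2
    rw [← ENNReal.ofReal_natCast, ← ENNReal.ofReal_mul (Nat.cast_nonneg _)] at hle
    exact (ENNReal.ofReal_le_ofReal_iff (by positivity)).mp hle
  -- F is finite
  have h2sd_pos : (0:ℝ) < C₀⁻¹ * (2*s) ^ d := by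
    have := Real.rpow_pos_of_pos (show (0:ℝ) < 2*s by linarith) d
    positivity
  have hFfin : F.Finite := by
    by_contra hinf
    obtain ⟨T, hT, hTcard⟩ := (Set.Infinite.exists_subset_card_eq hinf
      (⌊C₀ * r ^ d / (C₀⁻¹ * (2*s) ^ d)⌋₊ + 1))
    have h1 := hpack T hT
    have h2 : (T.card : ℝ) ≤ C₀ * r ^ d / (C₀⁻¹ * (2*s) ^ d) := by
      rw [le_div_iff₀ h2sd_pos]
      exact h1
    rw [hTcard] at h2
    push_cast at h2
    have := Nat.lt_floor_add_one (C₀ * r ^ d / (C₀⁻¹ * (2*s) ^ d))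
    linarith
  set T : Finset (EuclideanSpace ℝ (Fin n)) := hFfin.toFinset with hTdef
  have hTF : ↑T ⊆ F := by rw [hTdef]; simp
  set N : ℝ := (T.card : ℝ) with hNdef
  have hN0 : 0 ≤ N := Nat.cast_nonneg _
  -- covering bound via volume
  have hcover : ball x (r/2) ⊆ ⋃ f ∈ T, ball f (5*s) := by
    intro A hA
    have hA' : A ∈ ball x r := by
      rw [mem_ball] at hA ⊢; linarith
    obtain ⟨y, hyΓ, hyA⟩ := hdense A hA'
    have hyY : y ∈ Y := by
      refine ⟨hyΓ, ?_⟩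
      rw [mem_ball]
      have := dist_triangle y A x
      rw [mem_ball] at hA
      linarith
    obtain ⟨f, hfF, hyf⟩ := hnet y hyY
    simp only [mem_iUnion]
    refine ⟨f, by rw [hTdef]; simpa using hfF, ?_⟩
    rw [mem_ball]
    have := dist_triangle A y f
    rw [dist_comm y A] at hyA
    linarith
  set v : ENNReal := volume (ball (0:EuclideanSpace ℝ (Fin n)) 1) with hv
  have hv0 : v ≠ 0 := (measure_ball_pos volume 0 one_pos).ne'
  have hvtop : v ≠ ⊤ := measure_ball_lt_top.ne
  have hballvol : ∀ (z : EuclideanSpace ℝ (Fin n)) (ρ : ℝ), 0 ≤ ρ → volume (ball z ρ) = ENNReal.ofReal (ρ ^ n) * v := by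
    intro z ρ hρ
    rw [Measure.addHaar_ball volume z hρ]
    congr 2
    simp
  have hvol : ENNReal.ofReal ((r/2) ^ n) * v ≤ (T.card : ENNReal) * (ENNReal.ofReal ((5*s) ^ n) * v) := by
    calc ENNReal.ofReal ((r/2) ^ n) * v = volume (ball x (r/2)) := (hballvol x (r/2) (by linarith)).symm
      _ ≤ volume (⋃ f ∈ T, ball f (5*s)) := measure_mono hcover
      _ ≤ ∑ f ∈ T, volume (ball f (5*s)) := measure_biUnion_finset_le T _
      _ = (T.card : ENNReal) * (ENNReal.ofReal ((5*s) ^ n) * v) := by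
          rw [Finset.sum_congr rfl (fun f _ => hballvol f (5*s) (by linarith))]
          rw [Finset.sum_const, nsmul_eq_mul]
  -- convert to real inequality
  have hA : (r/2) ^ n ≤ N * (5*s) ^ n := by
    rw [← mul_assoc, ENNReal.mul_le_mul_iff_left hv0 hvtop] at hvol
    rw [← ENNReal.ofReal_natCast, ← ENNReal.ofReal_mul (Nat.cast_nonneg _)] at hvol
    exact (ENNReal.ofReal_le_ofReal_iff
      (mul_nonneg (Nat.cast_nonneg _) (pow_nonneg (by linarith) n))).mp hvol
  have hB := hpack T hTF
  -- final contradiction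
  have h5s : (0:ℝ) < 5*s := by linarith
  have hA' : (C₁/10) ^ n ≤ N := by
    have key : (C₁/10) * (5*s) = r/2 := by
      rw [hsdef]
      field_simp
      ring
    have h := hA
    rw [← key, mul_pow] at h
    exact le_of_mul_le_mul_right (by linarith [h]) (pow_pos h5s n)
  have hB' : N * (2*s) ^ d ≤ C₀ ^ 2 * r ^ d := by
    have h := mul_le_mul_of_nonneg_left hB hC₀.le
    calc N * (2*s) ^ d = C₀ * (N * (C₀⁻¹ * (2*s) ^ d)) := by
          field_simp
      _ ≤ C₀ * (C₀ * r ^ d) := h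
      _ = C₀ ^ 2 * r ^ d := by ring
  have hrs : r = (C₁/2) * (2*s) := by
    rw [hsdef]; field_simp
  have hABc : (C₁/10) ^ n ≤ C₀ ^ 2 * (C₁/2) ^ d := by
    have h2s : (0:ℝ) < 2*s := by linarith
    have hrd : r ^ d = (C₁/2) ^ d * (2*s) ^ d := by
      rw [hrs, Real.mul_rpow (by positivity) h2s.le]
    have h := hB'
    rw [hrd] at h
    have h2 : N ≤ C₀ ^ 2 * (C₁/2) ^ d := by
      have hpos := Real.rpow_pos_of_pos h2s d
      nlinarith [Real.rpow_pos_of_pos h2s d]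
    exact hA'.trans h2
  -- show the opposite strict inequality
  have hC110 : (1:ℝ) ≤ C₁/10 := by linarith
  have hfinal : C₀ ^ 2 * (C₁/2) ^ d < (C₁/10) ^ n := by
    have hsplit : ((C₁/10) : ℝ) ^ d * 5 ^ d = (C₁/2) ^ d := by
      rw [← Real.mul_rpow (by linarith) (by norm_num)]
      congr 1
      ring
    have hexp : ((C₁/10) : ℝ) ^ (d+1) ≤ (C₁/10) ^ ((n:ℝ)) :=
      Real.rpow_le_rpow_of_exponent_le hC110 (by linarith)
    have hnat : ((C₁/10) : ℝ) ^ ((n:ℝ)) = (C₁/10) ^ n := Real.rpow_natCast _ n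
    have hadd : ((C₁/10) : ℝ) ^ (d+1) = (C₁/10) ^ d * (C₁/10) := by
      rw [Real.rpow_add (by linarith), Real.rpow_one]
    have hkey : C₀ ^ 2 * 5 ^ d < C₁/10 := by
      have h5 : (5:ℝ) ^ d < 5 ^ ((n:ℝ) - 1) :=
        Real.rpow_lt_rpow_of_exponent_lt (by norm_num) (by linarith)
      have h510 : (5:ℝ) ^ ((n:ℝ)-1) ≤ 10 ^ ((n:ℝ)-1) :=
        Real.rpow_le_rpow (by norm_num) (by norm_num) (by linarith)
      have h10 : (10:ℝ) ^ ((n:ℝ)-1) = 10 ^ n / 10 := by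
        rw [show ((n:ℝ) - 1) = (n:ℝ) + (-1) by ring, Real.rpow_add (by norm_num),
          Real.rpow_natCast, Real.rpow_neg_one]
        ring
      have hC110' : C₁/10 = 10 ^ n / 10 * C₀ ^ 2 + 1 := by
        rw [hC₁def]; ring
      rw [hC110']
      have hC₀2 : (0:ℝ) < C₀ ^ 2 := by positivity
      nlinarith [h5, h510, h10]
    have hdpos : (0:ℝ) < (C₁/10) ^ d := Real.rpow_pos_of_pos (by linarith) d
    calc C₀ ^ 2 * (C₁/2) ^ d = (C₁/10) ^ d * (C₀ ^ 2 * 5 ^ d) := by rw [← hsplit]; ring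
      _ < (C₁/10) ^ d * (C₁/10) := by
          exact mul_lt_mul_of_pos_left hkey hdpos
      _ = (C₁/10) ^ (d+1) := hadd.symm
      _ ≤ (C₁/10) ^ ((n:ℝ)) := hexp
      _ = (C₁/10) ^ n := hnat
  linarith
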